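/- Let λ₁λ₂ > 0, Q(u) = (λ₁u₁² + λ₂u₂²)/2, X(u) = (u₁,u₂,Q(u)), and let U ⊂ ℝ² be open with the closed ball B̄(0,r₀) ⊆ U for some r₀ > 0. Set S_Q = X(U) and μ_Q = χ·H²⌊S_Q, where χ : ℝ³ → [0,∞) is bounded and satisfies χ ≥ c_χ > 0 on X(B̄(0,r₀)). For ρ ∈ (0,1] define the extreme strip E^ext_{e₁} := {X(u) : u ∈ U, |n_Q(u)·e₁| ≤ ρ^{1/2}}, where e₁ = (1,0,0). Then there exist ρ₀ ∈ (0,1] and c > 0, depending only on λ₁, λ₂, r₀, and c_χ, such that for every 0 < ρ ≤ ρ₀ there is a tube T_ρ of direction e₁, radius comparable to ρ, and length comparable to 1, with axis through the origin, satisfying μ_Q(S_Q ∩ T_ρ ∩ E^ext_{e₁}) ≥ c ρ^{3/2}. -/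

import Mathlib

noncomputable section
open MeasureTheory Metric Set Function
open scoped ENNReal RealInnerProductSpace

abbrev E3 : Type := EuclideanSpace ℝ (Fin 3)
abbrev E2 : Type := EuclideanSpace ℝ (Fin 2)

def mk3 (a b c : ℝ) : E3 := (WithLp.equiv 2 (Fin 3 → ℝ)).symm ![a, b, c]

/-- Quadratic graph parametrization `X(u) = (u₁, u₂, (l₁u₁² + l₂u₂²)/2)`. -/
def Xf (l₁ l₂ : ℝ) (u : E2) : E3 := mk3 (u 0) (u 1) ((l₁ * (u 0) ^ 2 + l₂ * (u 1) ^ 2) / 2)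

/-- Unit normal of the quadratic graph at `X(u)`. -/
def nQ (l₁ l₂ : ℝ) (u : E2) : E3 :=
  (Real.sqrt (1 + l₁ ^ 2 * (u 0) ^ 2 + l₂ ^ 2 * (u 1) ^ 2))⁻¹ •
    mk3 (-(l₁ * u 0)) (-(l₂ * u 1)) 1

/-- The tube `T(v, y₀, s₀, r, L)`. -/
def tube (v y₀ : E3) (s₀ r L : ℝ) : Set E3 :=
  {x | ‖x - ⟪x, v⟫ • v - y₀‖ ≤ r ∧ |⟪x, v⟫ - s₀| ≤ L}

/-- The surface measure `μ_Q = χ·H²⌊S_Q` of the quadratic patch `S_Q = X(U)`. -/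
def muQ (l₁ l₂ : ℝ) (U : Set E2) (χ : E3 → ℝ) : Measure E3 :=
  ((μH[2] : Measure E3).restrict (Xf l₁ l₂ '' U)).withDensity fun x => ENNReal.ofReal (χ x)

def e1 : E3 := mk3 1 0 0

/-! ### Auxiliary lemmas -/

lemma inner_Xf_e1 (l₁ l₂ : ℝ) (u : E2) : ⟪Xf l₁ l₂ u, e1⟫ = u 0 := by
  simp [Xf, e1, mk3, PiLp.inner_apply, RCLike.inner_apply, Fin.sum_univ_three]

/-- Projection to the first two coordinates. -/
def P3 (x : E3) : E2 := (WithLp.equiv 2 (Fin 2 → ℝ)).symm ![x 0, x 1]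

lemma P3_Xf (l₁ l₂ : ℝ) (u : E2) : P3 (Xf l₁ l₂ u) = u := by
  ext i; fin_cases i <;> rfl

lemma lipschitz_P3 : LipschitzWith 1 P3 := by
  apply LipschitzWith.of_dist_le_mul
  intro x y
  rw [NNReal.coe_one, one_mul, EuclideanSpace.dist_eq, EuclideanSpace.dist_eq]
  apply Real.sqrt_le_sqrt
  rw [Fin.sum_univ_two, Fin.sum_univ_three]
  have h0 : P3 x 0 = x 0 := rfl
  have h1 : P3 x 1 = x 1 := rfl
  have h0' : P3 y 0 = y 0 := rfl
  have h1' : P3 y 1 = y 1 := rfl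
  rw [h0, h1, h0', h1']
  nlinarith [sq_nonneg (dist (x 2) (y 2)), dist_nonneg (x := x 2) (y := y 2)]

lemma rect_vol (a b : ℝ) (ha : 0 ≤ a) (hb : 0 ≤ b) :
    ENNReal.ofReal (4 * a * b) ≤ μH[2] {u : E2 | |u 0| ≤ a ∧ |u 1| ≤ b} := by
  set A : Set E2 := {u : E2 | |u 0| ≤ a ∧ |u 1| ≤ b}
  have hpi : (μH[2] : Measure (Fin 2 → ℝ)) = volume := by
    simpa using hausdorffMeasure_pi_real (ι := Fin 2)
  have h2 := (PiLp.lipschitzWith_ofLp 2 (fun _ : Fin 2 => ℝ)).hausdorffMeasure_image_le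
      (d := 2) (by norm_num) A
  have himg : (WithLp.equiv 2 (Fin 2 → ℝ)) '' A
      = Set.univ.pi (fun i => Set.Icc (-(![a, b] i)) (![a, b] i)) := by
    ext x
    simp only [Set.mem_image, Set.mem_pi, Set.mem_univ, Set.mem_Icc, forall_true_left]
    constructor
    · rintro ⟨u, ⟨hu0, hu1⟩, rfl⟩
      intro i
      fin_cases i
      · simpa [abs_le] using hu0
      · simpa [abs_le] using hu1
    · intro h
      refine ⟨(WithLp.equiv 2 (Fin 2 → ℝ)).symm x, ⟨?_, ?_⟩, by simp⟩
      · simpa [abs_le] using h 0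
      · simpa [abs_le] using h 1
  have hvol : volume (Set.univ.pi (fun i => Set.Icc (-(![a, b] i)) (![a, b] i)))
      = ENNReal.ofReal (4 * a * b) := by
    rw [volume_pi_pi, Fin.prod_univ_two]
    simp only [Matrix.cons_val_zero, Matrix.cons_val_one, Matrix.head_cons, Real.volume_Icc]
    rw [← ENNReal.ofReal_mul (by linarith)]
    ring_nf
  calc ENNReal.ofReal (4 * a * b)
      = μH[2] ((WithLp.equiv 2 (Fin 2 → ℝ)) '' A) := by rw [himg, hpi, hvol]
    _ ≤ (1 : ℝ≥0∞) ^ (2 : ℝ) * μH[2] A := h2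
    _ = μH[2] A := by simp

lemma inner_nQ_e1 (l₁ l₂ : ℝ) (u : E2) :
    ⟪nQ l₁ l₂ u, e1⟫ =
      (Real.sqrt (1 + l₁ ^ 2 * (u 0) ^ 2 + l₂ ^ 2 * (u 1) ^ 2))⁻¹ * (-(l₁ * u 0)) := by
  simp [nQ, e1, mk3, PiLp.inner_apply, RCLike.inner_apply, Fin.sum_univ_three,
    PiLp.smul_apply, smul_eq_mul]

lemma Xf_sub (l₁ l₂ : ℝ) (u : E2) :
    Xf l₁ l₂ u - (u 0) • e1 - 0 = mk3 0 (u 1) ((l₁ * (u 0) ^ 2 + l₂ * (u 1) ^ 2) / 2) := by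
  ext i
  fin_cases i <;> simp [Xf, e1, mk3, PiLp.sub_apply, PiLp.smul_apply, smul_eq_mul]

lemma norm_mk3 (a b c : ℝ) : ‖mk3 a b c‖ = Real.sqrt (a ^ 2 + b ^ 2 + c ^ 2) := by
  rw [EuclideanSpace.norm_eq, Fin.sum_univ_three]
  norm_num [mk3, sq_abs, Matrix.cons_val]
  rfl

lemma norm_E2 (u : E2) : ‖u‖ = Real.sqrt ((u 0) ^ 2 + (u 1) ^ 2) := by
  rw [EuclideanSpace.norm_eq, Fin.sum_univ_two]
  norm_num [sq_abs]

lemma continuous_Xf (l₁ l₂ : ℝ) : Continuous (Xf l₁ l₂) := by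
  have hev : ∀ i : Fin 2, Continuous fun u : E2 => u i := fun i =>
    (continuous_apply i).comp (PiLp.continuous_ofLp 2 fun _ : Fin 2 => ℝ)
  have : Continuous fun u : E2 => (![u 0, u 1, (l₁ * (u 0) ^ 2 + l₂ * (u 1) ^ 2) / 2] :
      Fin 3 → ℝ) := by
    apply continuous_pi
    intro i
    fin_cases i
    · simpa using hev 0
    · simpa using hev 1
    · simp only [Matrix.cons_val_two, Matrix.tail_cons, Matrix.head_cons]
      exact ((continuous_const.mul ((hev 0).pow 2)).add (continuous_const.mul ((hev 1).pow 2))).div_const 2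
  exact (PiLp.continuous_toLp 2 fun _ : Fin 3 => ℝ).comp this


set_option maxHeartbeats 1600000 in
/-- extreme mass of a tangent tube (lower bound `ρ^{3/2}`). -/
theorem extreme_strip_mass_lower (l₁ l₂ r₀ cχ : ℝ) (hl : 0 < l₁ * l₂)
    (hr₀ : 0 < r₀) (hcχ : 0 < cχ) :
    ∃ ρ₀ ∈ Set.Ioc (0 : ℝ) 1, ∃ c : ℝ, 0 < c ∧ ∃ C : ℝ, 1 ≤ C ∧
      ∀ U : Set E2, IsOpen U → Metric.closedBall (0 : E2) r₀ ⊆ U →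
      ∀ χ : E3 → ℝ, (∀ x, 0 ≤ χ x) → (∃ M : ℝ, ∀ x, χ x ≤ M) →
        (∀ u : E2, ‖u‖ ≤ r₀ → cχ ≤ χ (Xf l₁ l₂ u)) →
        ∀ ρ : ℝ, 0 < ρ → ρ ≤ ρ₀ →
          -- a tube of direction e₁, radius comparable to ρ, length comparable to 1,
          -- with axis through the origin
          ∃ r l : ℝ, c * ρ ≤ r ∧ r ≤ C * ρ ∧ c ≤ l ∧ l ≤ C ∧
            ENNReal.ofReal (c * ρ ^ ((3 : ℝ) / 2)) ≤
              muQ l₁ l₂ U χ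
                (Xf l₁ l₂ '' U ∩ tube e1 0 0 r l ∩
                  Xf l₁ l₂ '' {u : E2 | u ∈ U ∧ |⟪nQ l₁ l₂ u, e1⟫| ≤ Real.sqrt ρ}) := by
  have habs1 : (0:ℝ) ≤ |l₁| := abs_nonneg _
  have habs2 : (0:ℝ) ≤ |l₂| := abs_nonneg _
  set K : ℝ := 1 + |l₁| + |l₂| with hKdef
  have hKpos : 0 < K := by positivity
  set δ : ℝ := min r₀ 1 / (2 * K) with hδdef
  have hδpos : 0 < δ := div_pos (lt_min hr₀ one_pos) (by positivity)
  have hδK : δ * K = min r₀ 1 / 2 := by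
    rw [hδdef]; field_simp
  have hδK2 : δ * K ≤ 1 / 2 := by
    rw [hδK]; have := min_le_right r₀ 1; linarith
  have hδKr : δ * K ≤ r₀ / 2 := by
    rw [hδK]; have := min_le_left r₀ 1; linarith
  have hδlK : δ ≤ δ * K := by nlinarith
  have hδ1 : δ ≤ 1 / 2 := hδlK.trans hδK2
  have hδr₀ : δ ≤ r₀ / 2 := hδlK.trans hδKr
  have hδl₁ : δ * |l₁| ≤ 1 / 2 := by nlinarith
  have hδl₁₂ : δ * (|l₁| + |l₂|) ≤ 1 / 2 := by nlinarith
  set c : ℝ := min (2 * δ) (min 1 (cχ * (4 * δ ^ 2))) with hcdef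
  have hcpos : 0 < c := lt_min (by positivity) (lt_min one_pos (by positivity))
  refine ⟨1, ⟨one_pos, le_refl 1⟩, c, hcpos, 2, by norm_num, ?_⟩
  intro U hUopen hUsub χ hχ0 _ hχc ρ hρpos hρ1
  have hsρ0 : (0:ℝ) ≤ Real.sqrt ρ := Real.sqrt_nonneg ρ
  have hsρ1 : Real.sqrt ρ ≤ 1 := (Real.sqrt_le_sqrt hρ1).trans_eq Real.sqrt_one
  set a : ℝ := δ * Real.sqrt ρ with hadef
  set b : ℝ := δ * ρ with hbdef
  have hapos : 0 < a := by positivity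
  have hbpos : 0 < b := by positivity
  set A : Set E2 := {u : E2 | |u 0| ≤ a ∧ |u 1| ≤ b} with hAdef
  -- coordinate bounds for u ∈ A
  have hρ2 : ρ ^ 2 ≤ ρ := by nlinarith
  have hbound : ∀ u ∈ A, (u 0) ^ 2 ≤ δ ^ 2 * ρ ∧ (u 1) ^ 2 ≤ δ ^ 2 * ρ ^ 2 := by
    intro u hu
    obtain ⟨h0, h1⟩ := hu
    constructor
    · have h := pow_le_pow_left₀ (abs_nonneg (u 0)) h0 2
      rw [sq_abs] at h
      calc (u 0) ^ 2 ≤ (δ * Real.sqrt ρ) ^ 2 := h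
        _ = δ ^ 2 * ρ := by rw [mul_pow, Real.sq_sqrt hρpos.le]
    · have h := pow_le_pow_left₀ (abs_nonneg (u 1)) h1 2
      rw [sq_abs] at h
      calc (u 1) ^ 2 ≤ (δ * ρ) ^ 2 := h
        _ = δ ^ 2 * ρ ^ 2 := by ring
  have hAnorm : ∀ u ∈ A, ‖u‖ ≤ r₀ := by
    intro u hu
    obtain ⟨e0, e1'⟩ := hbound u hu
    rw [norm_E2]
    have hδ2 : δ ^ 2 ≤ (r₀ / 2) ^ 2 := pow_le_pow_left₀ hδpos.le hδr₀ 2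
    have hsum : (u 0) ^ 2 + (u 1) ^ 2 ≤ r₀ ^ 2 := by
      nlinarith [mul_le_mul_of_nonneg_left hρ1 (sq_nonneg δ),
        mul_le_mul_of_nonneg_left hρ2 (sq_nonneg δ)]
    calc Real.sqrt ((u 0) ^ 2 + (u 1) ^ 2) ≤ Real.sqrt (r₀ ^ 2) := Real.sqrt_le_sqrt hsum
      _ = r₀ := Real.sqrt_sq hr₀.le
  have hAball : A ⊆ Metric.closedBall (0 : E2) r₀ := fun u hu =>
    mem_closedBall_zero_iff.mpr (hAnorm u hu)
  have hAU : A ⊆ U := fun u hu => hUsub (hAball hu)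
  -- the strip condition
  have hstrip : A ⊆ {u : E2 | u ∈ U ∧ |⟪nQ l₁ l₂ u, e1⟫| ≤ Real.sqrt ρ} := by
    intro u hu
    refine ⟨hAU hu, ?_⟩
    rw [inner_nQ_e1]
    set s : ℝ := Real.sqrt (1 + l₁ ^ 2 * (u 0) ^ 2 + l₂ ^ 2 * (u 1) ^ 2) with hsdef
    have hs1 : 1 ≤ s := by
      have h1' : (1:ℝ) ≤ 1 + l₁ ^ 2 * (u 0) ^ 2 + l₂ ^ 2 * (u 1) ^ 2 := by
        nlinarith [mul_nonneg (sq_nonneg l₁) (sq_nonneg (u 0)),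
          mul_nonneg (sq_nonneg l₂) (sq_nonneg (u 1))]
      calc (1:ℝ) = Real.sqrt 1 := Real.sqrt_one.symm
        _ ≤ s := Real.sqrt_le_sqrt h1'
    have hspos : 0 < s := lt_of_lt_of_le one_pos hs1
    have h2 : |l₁| * |u 0| ≤ Real.sqrt ρ := by
      have hm := mul_le_mul_of_nonneg_left hu.1 habs1
      nlinarith [mul_nonneg (by linarith : (0:ℝ) ≤ 1 - δ * |l₁|) hsρ0]
    calc |s⁻¹ * -(l₁ * u 0)| = s⁻¹ * (|l₁| * |u 0|) := by
          rw [abs_mul, abs_neg, abs_mul, abs_inv, abs_of_pos hspos]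
      _ ≤ 1 * Real.sqrt ρ := by
          apply mul_le_mul (inv_le_one_of_one_le₀ hs1) h2 (by positivity) zero_le_one
      _ = Real.sqrt ρ := one_mul _
  -- the tube condition
  have htube : ∀ u ∈ A, Xf l₁ l₂ u ∈ tube e1 0 0 (2 * δ * ρ) 1 := by
    intro u hu
    obtain ⟨e0, e1'⟩ := hbound u hu
    have hQ : |(l₁ * (u 0) ^ 2 + l₂ * (u 1) ^ 2) / 2| ≤ δ * ρ := by
      rw [abs_div, abs_of_pos (by norm_num : (0:ℝ) < 2)]
      have h1' : |l₁ * (u 0) ^ 2 + l₂ * (u 1) ^ 2| ≤ |l₁| * (u 0) ^ 2 + |l₂| * (u 1) ^ 2 := by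
        calc |l₁ * (u 0) ^ 2 + l₂ * (u 1) ^ 2| ≤ |l₁ * (u 0) ^ 2| + |l₂ * (u 1) ^ 2| :=
              abs_add_le _ _
          _ = |l₁| * (u 0) ^ 2 + |l₂| * (u 1) ^ 2 := by
              rw [abs_mul, abs_mul, abs_of_nonneg (sq_nonneg (u 0)),
                abs_of_nonneg (sq_nonneg (u 1))]
      have h2' : |l₁| * (u 0) ^ 2 + |l₂| * (u 1) ^ 2 ≤ δ * ρ := by
        nlinarith [mul_le_mul_of_nonneg_left e0 habs1, mul_le_mul_of_nonneg_left e1' habs2,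
          mul_le_mul_of_nonneg_left hδl₁₂ (mul_nonneg hδpos.le hρpos.le),
          mul_le_mul_of_nonneg_left hρ2 (mul_nonneg habs2 (sq_nonneg δ))]
      linarith
    constructor
    · show ‖Xf l₁ l₂ u - ⟪Xf l₁ l₂ u, e1⟫ • e1 - 0‖ ≤ 2 * δ * ρ
      rw [inner_Xf_e1, Xf_sub, norm_mk3]
      have hsq : (0:ℝ) ^ 2 + (u 1) ^ 2 + ((l₁ * (u 0) ^ 2 + l₂ * (u 1) ^ 2) / 2) ^ 2
          ≤ (2 * δ * ρ) ^ 2 := by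
        nlinarith [sq_abs ((l₁ * (u 0) ^ 2 + l₂ * (u 1) ^ 2) / 2),
          pow_le_pow_left₀ (abs_nonneg ((l₁ * (u 0) ^ 2 + l₂ * (u 1) ^ 2) / 2)) hQ 2]
      calc Real.sqrt ((0:ℝ) ^ 2 + (u 1) ^ 2 + ((l₁ * (u 0) ^ 2 + l₂ * (u 1) ^ 2) / 2) ^ 2)
          ≤ Real.sqrt ((2 * δ * ρ) ^ 2) := Real.sqrt_le_sqrt hsq
        _ = 2 * δ * ρ := Real.sqrt_sq (by positivity)
    · show |⟪Xf l₁ l₂ u, e1⟫ - 0| ≤ 1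
      rw [inner_Xf_e1, sub_zero]
      have := hu.1
      nlinarith [mul_nonneg hδpos.le (by linarith : (0:ℝ) ≤ 1 - Real.sqrt ρ)]
  -- measurability / compactness
  have hev : ∀ i : Fin 2, Continuous fun u : E2 => u i := fun i =>
    (continuous_apply i).comp (PiLp.continuous_ofLp 2 fun _ : Fin 2 => ℝ)
  have hAclosed : IsClosed A := by
    rw [hAdef, Set.setOf_and]
    exact (isClosed_le (continuous_abs.comp (hev 0)) continuous_const).inter
      (isClosed_le (continuous_abs.comp (hev 1)) continuous_const)
  have hXAcomp : IsCompact (Xf l₁ l₂ '' A) :=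
    ((isCompact_closedBall (0 : E2) r₀).of_isClosed_subset hAclosed hAball).image
      (continuous_Xf l₁ l₂)
  have hmeas : MeasurableSet (Xf l₁ l₂ '' A) := hXAcomp.isClosed.measurableSet
  have hXAU : Xf l₁ l₂ '' A ⊆ Xf l₁ l₂ '' U := Set.image_mono hAU
  have hA_sub : Xf l₁ l₂ '' A ⊆
      Xf l₁ l₂ '' U ∩ tube e1 0 0 (2 * δ * ρ) 1 ∩
        Xf l₁ l₂ '' {u : E2 | u ∈ U ∧ |⟪nQ l₁ l₂ u, e1⟫| ≤ Real.sqrt ρ} := by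
    rintro x ⟨u, hu, rfl⟩
    exact ⟨⟨Set.mem_image_of_mem _ (hAU hu), htube u hu⟩,
      Set.mem_image_of_mem _ (hstrip hu)⟩
  have hproj : μH[2] A ≤ μH[2] (Xf l₁ l₂ '' A) := by
    have h := lipschitz_P3.hausdorffMeasure_image_le (d := 2) (by norm_num) (Xf l₁ l₂ '' A)
    rw [Set.image_image] at h
    simp only [P3_Xf, Set.image_id'] at h
    simpa using h
  refine ⟨2 * δ * ρ, 1, ?_, ?_, ?_, by norm_num, ?_⟩
  · have hc2δ : c ≤ 2 * δ := min_le_left _ _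
    nlinarith
  · nlinarith
  · exact (min_le_right _ _).trans (min_le_left _ _)
  -- the mass bound
  have h32 : ρ ^ ((3:ℝ) / 2) = Real.sqrt ρ * ρ := by
    rw [show (3:ℝ) / 2 = 1 / 2 + 1 by norm_num, Real.rpow_add hρpos, Real.rpow_one,
      ← Real.sqrt_eq_rpow]
  have hc' : c ≤ cχ * (4 * δ ^ 2) := (min_le_right _ _).trans (min_le_right _ _)
  calc ENNReal.ofReal (c * ρ ^ ((3:ℝ) / 2))
      ≤ ENNReal.ofReal (cχ * (4 * a * b)) := by
        apply ENNReal.ofReal_le_ofReal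
        rw [h32, hadef, hbdef]
        nlinarith [mul_nonneg (sub_nonneg.mpr hc') (mul_nonneg hsρ0 hρpos.le)]
    _ = ENNReal.ofReal cχ * ENNReal.ofReal (4 * a * b) := ENNReal.ofReal_mul hcχ.le
    _ ≤ ENNReal.ofReal cχ * μH[2] A :=
        mul_le_mul_right (rect_vol a b hapos.le hbpos.le) _
    _ ≤ ENNReal.ofReal cχ * μH[2] (Xf l₁ l₂ '' A) := mul_le_mul_right hproj _
    _ = ENNReal.ofReal cχ * ((μH[2] : Measure E3).restrict (Xf l₁ l₂ '' U)) (Xf l₁ l₂ '' A) := by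
        rw [Measure.restrict_apply hmeas, Set.inter_eq_self_of_subset_left hXAU]
    _ = ∫⁻ _ in Xf l₁ l₂ '' A, ENNReal.ofReal cχ
          ∂((μH[2] : Measure E3).restrict (Xf l₁ l₂ '' U)) :=
        (setLIntegral_const _ _).symm
    _ ≤ ∫⁻ x in Xf l₁ l₂ '' A, ENNReal.ofReal (χ x)
          ∂((μH[2] : Measure E3).restrict (Xf l₁ l₂ '' U)) := by
        refine lintegral_mono_ae ?_
        filter_upwards [ae_restrict_mem hmeas] with x hx
        obtain ⟨u, hu, rfl⟩ := hx
        exact ENNReal.ofReal_le_ofReal (hχc u (hAnorm u hu))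
    _ = muQ l₁ l₂ U χ (Xf l₁ l₂ '' A) := (withDensity_apply _ hmeas).symm
    _ ≤ muQ l₁ l₂ U χ
          (Xf l₁ l₂ '' U ∩ tube e1 0 0 (2 * δ * ρ) 1 ∩
            Xf l₁ l₂ '' {u : E2 | u ∈ U ∧ |⟪nQ l₁ l₂ u, e1⟫| ≤ Real.sqrt ρ}) :=
        measure_mono hA_sub
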